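/- A unital C*-algebra B admits a dispersion-free state factorization (i.e. every state on B that is a barycenter of dispersion-free states) only if all commutators are annihilated: if ρ is a state on B that is a mixture (integral) of dispersion-free states, then ρ([A,B]*[A,B]) = 0 for all A, B ∈ B. -/
import Mathlib

open scoped ComplexOrder
open MeasureTheory

/-- If a state ρ on a unital C*-algebra B is a mixture (integral over a probability
measure) of dispersion-free (multiplicative) states, then ρ annihilates all
commutators: ρ([A,B]*[A,B]) = 0 for all A, B. -/
theorem stmt_3 {B : Type*} [NormedRing B] [StarRing B] [CStarRing B]
    [NormedAlgebra ℂ B] [StarModule ℂ B] [CompleteSpace B]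
    (ρ : B →ₗ[ℂ] ℂ) (hρpos : ∀ b : B, 0 ≤ ρ (star b * b)) (hρone : ρ 1 = 1)
    {Ω : Type*} [MeasurableSpace Ω] (μ : Measure Ω) [IsProbabilityMeasure μ]
    (ωs : Ω → B →ₗ[ℂ] ℂ)
    (hpos : ∀ s : Ω, ∀ b : B, 0 ≤ ωs s (star b * b))
    (hone : ∀ s : Ω, ωs s 1 = 1)
    (hmult : ∀ s : Ω, ∀ a b : B, ωs s (a * b) = ωs s a * ωs s b)
    (hmix : ∀ b : B, ρ b = ∫ s, ωs s b ∂μ) :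
    ∀ a b : B, ρ (star (a * b - b * a) * (a * b - b * a)) = 0 := by
  intro a b
  rw [hmix]
  have h : ∀ s, ωs s (star (a * b - b * a) * (a * b - b * a)) = 0 := fun s => by
    have hc : ωs s (a * b - b * a) = 0 := by
      rw [map_sub, hmult, hmult]; ring
    rw [hmult, hc, mul_zero]
  simp only [h, integral_zero]
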